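/- (Lemma D.4.) Let f be a T-feasible non-preemptive schedule. Then for every class i, the number of machines containing at least one job of C_i is at least m_i, and the total number of machines satisfies m ≥ Σ_{i=1}^c m_i. -/

import Mathlib

open Classical Finset

/-- The load of machine `u` in a non-preemptive schedule `f`. -/
noncomputable def npLoad {υ γ ι : Type*} [Fintype υ] [Fintype γ] [Fintype ι]
    (cl : ι → γ) (t : ι → ℝ) (s : γ → ℝ) (f : ι → υ) (u : υ) : ℝ :=
  (∑ j ∈ univ.filter (fun j => f j = u), t j) +
  (∑ i ∈ univ.filter (fun i => ∃ j, cl j = i ∧ f j = u), s i)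

/-- The minimum machine number `m_i` of class `i` for makespan `T`:
`⌈P(C_i)/(T−s_i)⌉` for an expensive class (`s_i > T/2`), and
`|C_i ∩ J_+| + ⌈P(C_i ∩ K)/(T−s_i)⌉` for a cheap class (`s_i ≤ T/2`), where
`J_+ = {j : t_j > T/2}` and `C_i ∩ K = {j ∈ C_i : t_j ≤ T/2 ∧ s_i + t_j > T/2}`. -/
noncomputable def mReq {γ ι : Type*} [Fintype γ] [Fintype ι]
    (cl : ι → γ) (t : ι → ℝ) (s : γ → ℝ) (T : ℝ) (i : γ) : ℤ :=
  if T / 2 < s i then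
    ⌈(∑ j ∈ univ.filter (fun j => cl j = i), t j) / (T - s i)⌉
  else
    ((univ.filter (fun j => cl j = i ∧ T / 2 < t j)).card : ℤ) +
    ⌈(∑ j ∈ univ.filter (fun j => cl j = i ∧ t j ≤ T / 2 ∧ T / 2 < s i + t j), t j) /
      (T - s i)⌉

section Aux

variable {υ γ ι : Type*} [Fintype υ] [Fintype γ] [Fintype ι]
  (cl : ι → γ) (t : ι → ℝ) (s : γ → ℝ) (f : ι → υ)

lemma np_load_ge (ht : ∀ j, 0 < t j) (hs : ∀ i, 0 < s i) (u : υ)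
    (A : Finset ι) (hA : ∀ j ∈ A, f j = u)
    (I : Finset γ) (hI : ∀ i ∈ I, ∃ j, cl j = i ∧ f j = u) :
    (∑ j ∈ A, t j) + (∑ i ∈ I, s i) ≤ npLoad cl t s f u := by
  unfold npLoad
  refine add_le_add ?_ ?_
  · apply Finset.sum_le_sum_of_subset_of_nonneg
    · intro j hj
      simp only [mem_filter, mem_univ, true_and]
      exact hA j hj
    · intros
      exact (ht _).le
  · apply Finset.sum_le_sum_of_subset_of_nonneg
    · intro i hi
      simp only [mem_filter, mem_univ, true_and]
      exact hI i hi
    · intros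
      exact (hs _).le

lemma np_pack (ht : ∀ j, 0 < t j) (A : Finset ι) (B : ℝ) (hB : 0 < B)
    (h : ∀ u, (∑ j ∈ A.filter (fun j => f j = u), t j) ≤ B) :
    ⌈(∑ j ∈ A, t j) / B⌉ ≤ ((A.image f).card : ℤ) := by
  have hrw : ∑ u ∈ A.image f, ∑ j ∈ A.filter (fun j => f j = u), t j = ∑ j ∈ A, t j := by
    apply Finset.sum_fiberwise_of_maps_to
    intro j hj
    exact Finset.mem_image_of_mem f hj
  have hsum : (∑ j ∈ A, t j) ≤ ((A.image f).card : ℝ) * B := by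
    rw [← hrw]
    calc ∑ u ∈ A.image f, ∑ j ∈ A.filter (fun j => f j = u), t j
        ≤ ∑ _u ∈ A.image f, B := Finset.sum_le_sum (fun u _ => h u)
      _ = ((A.image f).card : ℝ) * B := by rw [Finset.sum_const, nsmul_eq_mul]
  rw [Int.ceil_le]
  push_cast
  rw [div_le_iff₀ hB]
  exact hsum

/-- The set of machines hosting a "heavy" class-`i` job. -/
noncomputable def npHeavy (T : ℝ) (i : γ) : Finset υ :=
  univ.filter (fun u => ∃ j, cl j = i ∧ f j = u ∧ T / 2 < s i + t j)

lemma np_key (ht : ∀ j, 0 < t j) (hs : ∀ i, 0 < s i)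
    (hcl : ∀ i : γ, ∃ j, cl j = i) (T : ℝ)
    (hfeas : ∀ u, npLoad cl t s f u ≤ T) (i : γ) :
    mReq cl t s T i ≤ ((npHeavy cl t s f T i).card : ℤ) := by
  obtain ⟨j0, hj0⟩ := hcl i
  have hT0 : t j0 + s i ≤ T := by
    have h1 := np_load_ge cl t s f ht hs (f j0) {j0} (by simp) {i}
      (by simp; exact ⟨j0, hj0, rfl⟩)
    simp only [Finset.sum_singleton] at h1
    exact h1.trans (hfeas (f j0))
  have hTs : 0 < T - s i := by linarith [ht j0]
  -- per-machine class bound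
  have hostBound : ∀ u : υ, (∃ j, cl j = i ∧ f j = u) →
      (∑ j ∈ univ.filter (fun j => cl j = i ∧ f j = u), t j) + s i ≤ T := by
    intro u hu
    have h1 := np_load_ge cl t s f ht hs u (univ.filter (fun j => cl j = i ∧ f j = u))
      (fun j hj => (Finset.mem_filter.mp hj).2.2) {i} (by simpa using hu)
    simp only [Finset.sum_singleton] at h1
    exact h1.trans (hfeas u)
  unfold mReq npHeavy
  by_cases hexp : T / 2 < s i
  · -- expensive class
    simp only [if_pos hexp]
    have hpack := np_pack t f ht (univ.filter (fun j => cl j = i)) (T - s i) hTs ?_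
    · refine hpack.trans ?_
      have hsub : (univ.filter (fun j => cl j = i)).image f ⊆
          univ.filter (fun u => ∃ j, cl j = i ∧ f j = u ∧ T / 2 < s i + t j) := by
        intro u hu
        obtain ⟨j, hj, hfj⟩ := Finset.mem_image.mp hu
        simp only [Finset.mem_filter, Finset.mem_univ, true_and] at hj ⊢
        exact ⟨j, hj, hfj, by linarith [ht j]⟩
      exact_mod_cast Finset.card_le_card hsub
    · intro u
      rw [Finset.filter_filter]
      by_cases hu : ∃ j, cl j = i ∧ f j = u
      · linarith [hostBound u hu]
      · rw [Finset.filter_false_of_mem, Finset.sum_empty]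
        · linarith
        · intro j _ hj
          exact hu ⟨j, hj.1, hj.2⟩
  · -- cheap class
    simp only [if_neg hexp]
    push_neg at hexp
    set Bset := univ.filter (fun j => cl j = i ∧ T / 2 < t j) with hBset
    set Kset := univ.filter (fun j => cl j = i ∧ t j ≤ T / 2 ∧ T / 2 < s i + t j) with hKset
    -- f is injective on Bset
    have hinj : Set.InjOn f ↑Bset := by
      intro j hj k hk hfe
      by_contra hne
      simp only [hBset, Finset.coe_filter, Set.mem_setOf_eq] at hj hk
      have h1 := np_load_ge cl t s f ht hs (f j) {j, k}
        (by intro x hx; rcases Finset.mem_insert.mp hx with h | h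
            · rw [h]
            · rw [Finset.mem_singleton.mp h, ← hfe]) {i}
        (by simp; exact ⟨j, hj.2.1, rfl⟩)
      rw [Finset.sum_pair hne, Finset.sum_singleton] at h1
      have := h1.trans (hfeas (f j))
      linarith [hj.2.2, hk.2.2, hs i]
    have hcardB : (Bset.image f).card = Bset.card := Finset.card_image_of_injOn hinj
    -- pack Kset
    have hpackK := np_pack t f ht Kset (T - s i) hTs ?_
    swap
    · intro u
      by_cases hu : ∃ j, cl j = i ∧ f j = u
      · have hsub : Kset.filter (fun j => f j = u) ⊆
            univ.filter (fun j => cl j = i ∧ f j = u) := by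
          intro j hj
          simp only [hKset, Finset.mem_filter, Finset.mem_univ, true_and] at hj ⊢
          exact ⟨hj.1.1, hj.2⟩
        have := Finset.sum_le_sum_of_subset_of_nonneg hsub (fun j _ _ => (ht j).le)
        linarith [hostBound u hu]
      · rw [Finset.filter_false_of_mem, Finset.sum_empty]
        · linarith
        · intro j hj hfj
          simp only [hKset, Finset.mem_filter, Finset.mem_univ, true_and] at hj
          exact hu ⟨j, hj.1, hfj⟩
    -- image of Bset and image of Kset are disjoint
    have hdisj : Disjoint (Bset.image f) (Kset.image f) := by
      rw [Finset.disjoint_left]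
      intro u huB huK
      obtain ⟨j, hj, hfj⟩ := Finset.mem_image.mp huB
      obtain ⟨k, hk, hfk⟩ := Finset.mem_image.mp huK
      simp only [hBset, Finset.mem_filter, Finset.mem_univ, true_and] at hj
      simp only [hKset, Finset.mem_filter, Finset.mem_univ, true_and] at hk
      have hne : j ≠ k := by
        intro h
        rw [h] at hj
        linarith [hj.2, hk.2.1]
      have h1 := np_load_ge cl t s f ht hs u {j, k}
        (by intro x hx; rcases Finset.mem_insert.mp hx with h | h
            · rw [h]; exact hfj
            · rw [Finset.mem_singleton.mp h]; exact hfk) {i}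
        (by simp; exact ⟨j, hj.1, hfj⟩)
      rw [Finset.sum_pair hne, Finset.sum_singleton] at h1
      have := h1.trans (hfeas u)
      linarith [hj.2, hk.2.2]
    -- both images land in the heavy set
    have hsub : Bset.image f ∪ Kset.image f ⊆
        univ.filter (fun u => ∃ j, cl j = i ∧ f j = u ∧ T / 2 < s i + t j) := by
      intro u hu
      simp only [Finset.mem_filter, Finset.mem_univ, true_and]
      rcases Finset.mem_union.mp hu with h | h
      · obtain ⟨j, hj, hfj⟩ := Finset.mem_image.mp h
        simp only [hBset, Finset.mem_filter, Finset.mem_univ, true_and] at hj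
        exact ⟨j, hj.1, hfj, by linarith [hs i, hj.2]⟩
      · obtain ⟨j, hj, hfj⟩ := Finset.mem_image.mp h
        simp only [hKset, Finset.mem_filter, Finset.mem_univ, true_and] at hj
        exact ⟨j, hj.1, hfj, hj.2.2⟩
    have hcard : (Bset.image f).card + (Kset.image f).card ≤
        (univ.filter (fun u => ∃ j, cl j = i ∧ f j = u ∧ T / 2 < s i + t j)).card := by
      rw [← Finset.card_union_of_disjoint hdisj]
      exact Finset.card_le_card hsub
    calc (Bset.card : ℤ) + ⌈(∑ j ∈ Kset, t j) / (T - s i)⌉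
        ≤ ((Bset.image f).card : ℤ) + ((Kset.image f).card : ℤ) := by
          rw [hcardB]; exact add_le_add_right hpackK _
      _ ≤ _ := by exact_mod_cast hcard

end Aux

/-- Lemma D.4: in a `T`-feasible non-preemptive schedule, every class `i` uses at least
`m_i` machines, and the total number of machines is at least `Σ_i m_i`. -/
theorem np_min_machines {υ γ ι : Type*} [Fintype υ] [Fintype γ] [Fintype ι]
    (cl : ι → γ) (t : ι → ℝ) (s : γ → ℝ)
    (ht : ∀ j, 0 < t j) (hs : ∀ i, 0 < s i)
    (hcl : ∀ i : γ, ∃ j, cl j = i)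
    (T : ℝ) (f : ι → υ)
    (hfeas : ∀ u, npLoad cl t s f u ≤ T) :
    (∀ i : γ, mReq cl t s T i ≤
      ((univ.filter (fun u : υ => ∃ j, cl j = i ∧ f j = u)).card : ℤ)) ∧
    (∑ i : γ, mReq cl t s T i) ≤ (Fintype.card υ : ℤ) := by
  have key := np_key cl t s f ht hs hcl T hfeas
  constructor
  · intro i
    refine (key i).trans ?_
    have hsub : npHeavy cl t s f T i ⊆
        univ.filter (fun u : υ => ∃ j, cl j = i ∧ f j = u) := by
      intro u hu
      simp only [npHeavy, Finset.mem_filter, Finset.mem_univ, true_and] at hu ⊢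
      obtain ⟨j, h1, h2, _⟩ := hu
      exact ⟨j, h1, h2⟩
    exact_mod_cast Finset.card_le_card hsub
  · have hdisj : ∀ i ∈ (univ : Finset γ), ∀ i' ∈ (univ : Finset γ), i ≠ i' →
        Disjoint (npHeavy cl t s f T i) (npHeavy cl t s f T i') := by
      intro i _ i' _ hne
      rw [Finset.disjoint_left]
      intro u hu hu'
      simp only [npHeavy, Finset.mem_filter, Finset.mem_univ, true_and] at hu hu'
      obtain ⟨j, hj1, hj2, hj3⟩ := hu
      obtain ⟨k, hk1, hk2, hk3⟩ := hu'
      have hjk : j ≠ k := by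
        intro h
        rw [h, hk1] at hj1
        exact hne hj1.symm
      have h1 := np_load_ge cl t s f ht hs u {j, k}
        (by intro x hx; rcases Finset.mem_insert.mp hx with h | h
            · rw [h]; exact hj2
            · rw [Finset.mem_singleton.mp h]; exact hk2) {i, i'}
        (by intro x hx; rcases Finset.mem_insert.mp hx with h | h
            · exact h ▸ ⟨j, hj1, hj2⟩
            · exact (Finset.mem_singleton.mp h) ▸ ⟨k, hk1, hk2⟩)
      rw [Finset.sum_pair hjk, Finset.sum_pair hne] at h1
      have := h1.trans (hfeas u)
      linarith
    calc (∑ i : γ, mReq cl t s T i)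
        ≤ ∑ i : γ, ((npHeavy cl t s f T i).card : ℤ) := Finset.sum_le_sum (fun i _ => key i)
      _ = ((univ.biUnion (fun i : γ => npHeavy cl t s f T i)).card : ℤ) := by
          rw [Finset.card_biUnion hdisj]; push_cast; rfl
      _ ≤ (Fintype.card υ : ℤ) := by
          exact_mod_cast Finset.card_le_univ _
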